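/- Let $G$ be a finite graph, $S \subseteq V(G)$, and let $\Gamma$ be the set of interface vertices of $S$ (vertices of $S$ incident to an edge of $\mathrm{out}_G(S)$). Assume every vertex of $\Gamma$ is incident to exactly one edge of $\mathrm{out}_G(S)$, and let $\beta > 0$. Suppose there is a family $\mathcal{P}$ of paths in the induced subgraph $G[S]$ containing, for every unordered pair $\{u,v\}$ of distinct vertices of $\Gamma$, a path connecting $u$ to $v$, such that every edge of $G[S]$ lies on at most $\beta|\Gamma|$ paths of $\mathcal{P}$. Then $S$ is $\frac{1}{2\beta}$-well-linked in $G$: for every partition $(S_1,S_2)$ of $S$, writing $T_i = \mathrm{out}_G(S_i)\cap\mathrm{out}_G(S)$, one has $|E(S_1,S_2)| \ge \frac{1}{2\beta}\min\{|T_1|,|T_2|\}$. -/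

import Mathlib

/-- The set of edges of `G` with one endpoint in `A` and one endpoint in `B`. -/
def cutSet {V : Type*} (G : SimpleGraph V) (A B : Set V) : Set (Sym2 V) :=
  {e | ∃ u v, G.Adj u v ∧ u ∈ A ∧ v ∈ B ∧ e = s(u, v)}

/-- `out_G(J)`: the set of edges of `G` with exactly one endpoint in `J`. -/
def outSet {V : Type*} (G : SimpleGraph V) (J : Set V) : Set (Sym2 V) :=
  cutSet G J Jᶜ

/-- `J` is `α`-well-linked in `G`: for every partition `(J₁, J₂)` of `J`, writing
`Tᵢ = out(Jᵢ) ∩ out(J)`, we have `|E(J₁,J₂)| ≥ α · min {|T₁|, |T₂|}`. -/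
def IsWellLinked {V : Type*} (G : SimpleGraph V) (α : ℝ) (J : Set V) : Prop :=
  ∀ J₁ J₂ : Set V, J₁ ∪ J₂ = J → Disjoint J₁ J₂ →
    α * min ((outSet G J₁ ∩ outSet G J).ncard : ℝ)
            ((outSet G J₂ ∩ outSet G J).ncard : ℝ)
      ≤ ((cutSet G J₁ J₂).ncard : ℝ)

/-- `Γ(S)`: the interface vertices of `S`, i.e. the vertices of `S` incident to an
edge with the other endpoint outside `S`. -/
def interfaceSet {V : Type*} (G : SimpleGraph V) (S : Set V) : Set V :=
  {u ∈ S | ∃ v, v ∉ S ∧ G.Adj u v}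

lemma my_ncard_prod {α β : Type*} (s : Set α) (t : Set β) :
    (s ×ˢ t).ncard = s.ncard * t.ncard := by
  rw [← Nat.card_coe_set_eq, ← Nat.card_coe_set_eq, ← Nat.card_coe_set_eq,
      Nat.card_congr (Equiv.Set.prod s t), Nat.card_prod]

/-- Claim: if every interface vertex of `S` has exactly one outgoing edge, and there
is a family of paths inside `G[S]` (one path per unordered pair of distinct interface
vertices, so `P u v` is the reverse of `P v u`) such that every edge lies on at most
`β |Γ(S)|` of the (unordered) paths -- i.e. on at most `2 β |Γ(S)|` of the ordered
versions -- then `S` is `1/(2β)`-well-linked in `G`. -/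
theorem congestion_implies_wellLinked {V : Type*} [Fintype V] (G : SimpleGraph V)
    (S : Set V) (β : ℝ) (hβ : 0 < β)
    (hone : ∀ u ∈ interfaceSet G S, {v : V | v ∉ S ∧ G.Adj u v}.ncard = 1)
    (hpaths : ∃ P : (u : V) → (v : V) → G.Walk u v,
      (∀ u ∈ interfaceSet G S, ∀ v ∈ interfaceSet G S, u ≠ v →
        (P u v).IsPath ∧ ∀ w ∈ (P u v).support, w ∈ S) ∧
      (∀ u ∈ interfaceSet G S, ∀ v ∈ interfaceSet G S, u ≠ v →
        P u v = (P v u).reverse) ∧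
      (∀ e : Sym2 V,
        ({p : V × V | p.1 ∈ interfaceSet G S ∧ p.2 ∈ interfaceSet G S ∧
            p.1 ≠ p.2 ∧ e ∈ (P p.1 p.2).edges}.ncard : ℝ)
          ≤ 2 * (β * (interfaceSet G S).ncard))) :
    IsWellLinked G (1 / (2 * β)) S := by
  classical
  obtain ⟨P, hP, _, hcong⟩ := hpaths
  intro S₁ S₂ hunion hdisj
  set Γ := interfaceSet G S with hΓ
  -- choose the unique out-neighbour of each interface vertex
  have hch : ∀ u, ∃ a, u ∈ Γ → {v : V | v ∉ S ∧ G.Adj u v} = {a} := by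
    intro u
    by_cases hu : u ∈ Γ
    · obtain ⟨a, ha⟩ := Set.ncard_eq_one.mp (hone u hu)
      exact ⟨a, fun _ => ha⟩
    · exact ⟨u, fun h => absurd h hu⟩
  choose ov hov using hch
  have hov1 : ∀ u ∈ Γ, ov u ∉ S ∧ G.Adj u (ov u) := by
    intro u hu
    have h := hov u hu
    have : ov u ∈ {v : V | v ∉ S ∧ G.Adj u v} := by rw [h]; rfl
    exact this
  have hov2 : ∀ u ∈ Γ, ∀ v, v ∉ S → G.Adj u v → v = ov u := by
    intro u hu v h1 h2
    have h := hov u hu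
    have : v ∈ ({ov u} : Set V) := h ▸ (⟨h1, h2⟩ : v ∈ {v : V | v ∉ S ∧ G.Adj u v})
    exact this
  -- |T_i| = |Γ ∩ S_i|
  have hT : ∀ A : Set V, A ⊆ S →
      (outSet G A ∩ outSet G S).ncard = (Γ ∩ A).ncard := by
    intro A hA
    have hTeq : outSet G A ∩ outSet G S = (fun u => s(u, ov u)) '' (Γ ∩ A) := by
      ext e
      constructor
      · rintro ⟨⟨u, v, hadj, huA, hvA, rfl⟩, ⟨u', v', hadj', hu'S, hv'S, he'⟩⟩
        rw [Sym2.eq_iff] at he'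
        rcases he' with ⟨rfl, rfl⟩ | ⟨rfl, rfl⟩
        · have huΓ : u ∈ Γ := ⟨hA huA, v, hv'S, hadj⟩
          have hve : v = ov u := hov2 u huΓ v hv'S hadj
          exact ⟨u, ⟨huΓ, huA⟩, by rw [hve]⟩
        · exact absurd (hA huA) hv'S
      · rintro ⟨u, ⟨huΓ, huA⟩, rfl⟩
        obtain ⟨hnS, hadj⟩ := hov1 u huΓ
        exact ⟨⟨u, ov u, hadj, huA, fun h => hnS (hA h), rfl⟩,
               ⟨u, ov u, hadj, hA huA, hnS, rfl⟩⟩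
    rw [hTeq]
    apply Set.ncard_image_of_injOn
    intro u hu u' hu' he
    rw [Sym2.eq_iff] at he
    rcases he with ⟨h1, _⟩ | ⟨h1, h2⟩
    · exact h1
    · exact absurd (h1 ▸ hu.1.1) (hov1 u' hu'.1).1
  have hS₁S : S₁ ⊆ S := hunion ▸ Set.subset_union_left
  have hS₂S : S₂ ⊆ S := hunion ▸ Set.subset_union_right
  set A := Γ ∩ S₁ with hA
  set B := Γ ∩ S₂ with hB
  have hABdisj : Disjoint A B := (hdisj.mono Set.inter_subset_right Set.inter_subset_right)
  have hΓsplit : A ∪ B = Γ := by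
    rw [hA, hB, ← Set.inter_union_distrib_left, hunion]
    exact Set.inter_eq_left.mpr (fun u hu => hu.1)
  have hΓcard : Γ.ncard = A.ncard + B.ncard := by
    rw [← hΓsplit, Set.ncard_union_eq hABdisj (Set.toFinite _) (Set.toFinite _)]
  -- the set of ordered crossing pairs
  set D : Set (V × V) := (A ×ˢ B) ∪ (B ×ˢ A) with hD
  have hDmem : ∀ p ∈ D, p.1 ∈ Γ ∧ p.2 ∈ Γ ∧ p.1 ≠ p.2 := by
    rintro ⟨u, v⟩ (⟨hu, hv⟩ | ⟨hu, hv⟩)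
    · exact ⟨hu.1, hv.1, fun h => hdisj.ne_of_mem hu.2 hv.2 h⟩
    · exact ⟨hu.1, hv.1, fun h => hdisj.ne_of_mem hv.2 hu.2 h.symm⟩
  -- every crossing pair's path uses a cut edge
  set C : Set (Sym2 V) := cutSet G S₁ S₂ with hC
  have hcross : ∀ p ∈ D, ∃ e ∈ C, e ∈ (P p.1 p.2).edges := by
    rintro ⟨u, v⟩ hp
    obtain ⟨huΓ, hvΓ, hne⟩ := hDmem _ hp
    have hsupp := (hP u huΓ v hvΓ hne).2
    rcases hp with ⟨hu, hv⟩ | ⟨hu, hv⟩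
    · -- u ∈ S₁, v ∈ S₂
      have hvnot : v ∉ S₁ := fun h => hdisj.ne_of_mem h hv.2 rfl
      obtain ⟨d, hd, hd1, hd2⟩ := (P u v).exists_boundary_dart S₁ hu.2 hvnot
      have hd2' : d.snd ∈ S₂ := by
        have := hsupp d.snd ((P u v).dart_snd_mem_support_of_mem_darts hd)
        rw [← hunion] at this
        exact this.resolve_left hd2
      refine ⟨d.edge, ⟨d.fst, d.snd, d.adj, hd1, hd2', ?_⟩,
        List.mem_map_of_mem (f := SimpleGraph.Dart.edge) hd⟩
      rfl
    · -- u ∈ S₂, v ∈ S₁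
      have hvnot : v ∉ S₂ := fun h => hdisj.ne_of_mem hv.2 h rfl
      obtain ⟨d, hd, hd1, hd2⟩ := (P u v).exists_boundary_dart S₂ hu.2 hvnot
      have hd2' : d.snd ∈ S₁ := by
        have := hsupp d.snd ((P u v).dart_snd_mem_support_of_mem_darts hd)
        rw [← hunion] at this
        exact this.resolve_right hd2
      refine ⟨d.edge, ⟨d.snd, d.fst, d.adj.symm, hd2', hd1, ?_⟩,
        List.mem_map_of_mem (f := SimpleGraph.Dart.edge) hd⟩
      exact Sym2.eq_swap.symm
  -- double counting
  set F : Sym2 V → Set (V × V) := fun e => {p | p ∈ D ∧ e ∈ (P p.1 p.2).edges} with hF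
  have hsub : D.toFinite.toFinset ⊆
      C.toFinite.toFinset.biUnion (fun e => (F e).toFinite.toFinset) := by
    intro p hp
    rw [Set.Finite.mem_toFinset] at hp
    obtain ⟨e, heC, hee⟩ := hcross p hp
    exact Finset.mem_biUnion.mpr ⟨e, (Set.Finite.mem_toFinset _).mpr heC,
      (Set.Finite.mem_toFinset _).mpr ⟨hp, hee⟩⟩
  have hDcard : D.toFinite.toFinset.card = D.ncard :=
    (Set.ncard_eq_toFinset_card D D.toFinite).symm
  have hcount : (D.ncard : ℝ) ≤ (C.ncard : ℝ) * (2 * (β * Γ.ncard)) := by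
    have h1 : D.toFinite.toFinset.card ≤
        ∑ e ∈ C.toFinite.toFinset, (F e).toFinite.toFinset.card :=
      le_trans (Finset.card_le_card hsub) (Finset.card_biUnion_le)
    have h2 : ∀ e ∈ C.toFinite.toFinset,
        ((F e).toFinite.toFinset.card : ℝ) ≤ 2 * (β * Γ.ncard) := by
      intro e _
      rw [← Set.ncard_eq_toFinset_card (F e) (F e).toFinite]
      refine le_trans ?_ (hcong e)
      have hsub2 : F e ⊆ {p : V × V | p.1 ∈ Γ ∧ p.2 ∈ Γ ∧ p.1 ≠ p.2 ∧
          e ∈ (P p.1 p.2).edges} := by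
        rintro p ⟨hpD, hpe⟩
        obtain ⟨h1, h2, h3⟩ := hDmem p hpD
        exact ⟨h1, h2, h3, hpe⟩
      exact_mod_cast Nat.cast_le.mpr (Set.ncard_le_ncard hsub2 (Set.toFinite _))
    calc (D.ncard : ℝ) = (D.toFinite.toFinset.card : ℝ) := by rw [hDcard]
      _ ≤ (∑ e ∈ C.toFinite.toFinset, (F e).toFinite.toFinset.card : ℕ) := by
          exact_mod_cast h1
      _ = ∑ e ∈ C.toFinite.toFinset, ((F e).toFinite.toFinset.card : ℝ) := by
          push_cast; rfl
      _ ≤ ∑ _e ∈ C.toFinite.toFinset, (2 * (β * Γ.ncard)) := Finset.sum_le_sum h2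
      _ = (C.toFinite.toFinset.card : ℝ) * (2 * (β * Γ.ncard)) := by
          rw [Finset.sum_const, nsmul_eq_mul]
      _ = (C.ncard : ℝ) * (2 * (β * Γ.ncard)) := by
          rw [← Set.ncard_eq_toFinset_card C C.toFinite]
  -- compute |D| = 2ab
  have hDcard2 : D.ncard = A.ncard * B.ncard + B.ncard * A.ncard := by
    rw [hD, Set.ncard_union_eq ?_ (Set.toFinite _) (Set.toFinite _),
        my_ncard_prod, my_ncard_prod]
    rw [Set.disjoint_left]
    rintro ⟨u, v⟩ ⟨hu, hv⟩ ⟨hu', hv'⟩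
    exact Set.disjoint_left.mp hABdisj hu hu'
  -- wrap up
  rw [hT S₁ hS₁S, hT S₂ hS₂S]
  set a := A.ncard
  set b := B.ncard
  set c := C.ncard
  have key : (a : ℝ) * b + b * a ≤ (c : ℝ) * (2 * (β * (a + b))) := by
    have := hcount
    rw [hDcard2] at this
    push_cast at this ⊢
    rw [hΓcard] at this
    push_cast at this
    linarith
  have hc0 : (0 : ℝ) ≤ c := Nat.cast_nonneg c
  rcases Nat.eq_zero_or_pos (a + b) with h0 | hpos
  · obtain ⟨ha0, hb0⟩ := Nat.add_eq_zero.mp h0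
    rw [ha0, hb0]
    simp [hc0]
  · have hab : (0 : ℝ) < (a : ℝ) + b := by exact_mod_cast hpos
    have hmin : min ((a : ℝ)) ((b : ℝ)) ≤ 2 * β * c := by
      have hmina : min ((a : ℝ)) b ≤ a := min_le_left _ _
      have hminb : min ((a : ℝ)) b ≤ b := min_le_right _ _
      have h1 : min ((a : ℝ)) b * ((a : ℝ) + b) ≤ 2 * β * c * ((a : ℝ) + b) := by
        have h2 : min ((a : ℝ)) b * ((a : ℝ) + b) ≤ (a : ℝ) * b + (b : ℝ) * a := by
          have hb0 : (0:ℝ) ≤ b := Nat.cast_nonneg b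
          have ha0 : (0:ℝ) ≤ a := Nat.cast_nonneg a
          nlinarith
        nlinarith
      exact le_of_mul_le_mul_right (by linarith) hab
    rw [div_mul_eq_mul_div, one_mul, div_le_iff₀ (by positivity)]
    calc min ((a:ℝ)) b ≤ 2 * β * c := hmin
      _ = (c : ℝ) * (2 * β) := by ring
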